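/- arXiv:2101.02464 — 2 statements merged into one kernel-verified Lean document; each statement's English description precedes it below -/
import Mathlib

section
/- Let ρ be an n-qubit state and suppose each of the n qubit pairs of ρ ⊗ ρ is measured in the Bell basis, yielding projectors S₁,…,S_n. Then for any Pauli observable P = σ₁ ⊗ ⋯ ⊗ σ_n, E[∏_{k=1}^n Tr((σ_k ⊗ σ_k) S_k)] = Tr((P ⊗ P)(ρ ⊗ ρ)) = |Tr(Pρ)|², and each factor Tr((σ_k ⊗ σ_k)S_k) ∈ {+1, −1}. -/
open Matrix BigOperators
open scoped Kronecker ComplexOrder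

/-- The single-qubit Pauli matrices `I, X, Y, Z`. -/
noncomputable def pauliM : Fin 4 → Matrix (Fin 2) (Fin 2) ℂ
  | 0 => 1
  | 1 => !![0, 1; 1, 0]
  | 2 => !![0, -Complex.I; Complex.I, 0]
  | 3 => !![1, 0; 0, -1]

/-- The `n`-qubit Pauli operator `P_a = σ_{a 1} ⊗ ⋯ ⊗ σ_{a n}`. -/
noncomputable def nPauli {n : ℕ} (a : Fin n → Fin 4) :
    Matrix (Fin n → Fin 2) (Fin n → Fin 2) ℂ :=
  fun x y => ∏ i, pauliM (a i) (x i) (y i)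

/-- The four Bell states `Ψ⁺, Ψ⁻, Φ⁺, Φ⁻` on two qubits. -/
noncomputable def bellVec : Fin 4 → Fin 2 → Fin 2 → ℂ
  | 0 => fun x y => if x = y then ((Real.sqrt 2 : ℝ) : ℂ)⁻¹ else 0
  | 1 => fun x y => if x = y then
      (if x = 0 then ((Real.sqrt 2 : ℝ) : ℂ)⁻¹ else -((Real.sqrt 2 : ℝ) : ℂ)⁻¹) else 0
  | 2 => fun x y => if x ≠ y then ((Real.sqrt 2 : ℝ) : ℂ)⁻¹ else 0
  | 3 => fun x y => if x ≠ y then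
      (if x = 0 then ((Real.sqrt 2 : ℝ) : ℂ)⁻¹ else -((Real.sqrt 2 : ℝ) : ℂ)⁻¹) else 0

/-- The rank-one projector onto the Bell state `k`, acting on a qubit of each copy. -/
noncomputable def bellProj (k : Fin 4) : Matrix (Fin 2 × Fin 2) (Fin 2 × Fin 2) ℂ :=
  fun p q => bellVec k p.1 p.2 * (starRingEnd ℂ) (bellVec k q.1 q.2)

/-- `Tr((σ ⊗ σ) S_k)` for a single-qubit Pauli `σ` and Bell outcome projector `S_k`. -/
noncomputable def bellFactor (σ k : Fin 4) : ℂ :=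
  ((pauliM σ ⊗ₖ pauliM σ) * bellProj k).trace

/-- The full projector on `(ρ ⊗ ρ)` corresponding to Bell outcomes `b k` on the
`n` qubit pairs. -/
noncomputable def bellOutcomeProj {n : ℕ} (b : Fin n → Fin 4) :
    Matrix ((Fin n → Fin 2) × (Fin n → Fin 2)) ((Fin n → Fin 2) × (Fin n → Fin 2)) ℂ :=
  fun p q => ∏ k, bellProj (b k) ((p.1 k, p.2 k)) ((q.1 k, q.2 k))

/-- `ρ ⊗ ρ` as a matrix on the two copies. -/
noncomputable def twoCopies {n : ℕ} (ρ : Matrix (Fin n → Fin 2) (Fin n → Fin 2) ℂ) :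
    Matrix ((Fin n → Fin 2) × (Fin n → Fin 2)) ((Fin n → Fin 2) × (Fin n → Fin 2)) ℂ :=
  fun p q => ρ p.1 q.1 * ρ p.2 q.2

lemma sq2 : ((Real.sqrt 2 : ℝ) : ℂ)⁻¹ * ((Real.sqrt 2 : ℝ) : ℂ)⁻¹ = 2⁻¹ := by
  rw [← mul_inv, ← Complex.ofReal_mul, Real.mul_self_sqrt (by norm_num)]
  norm_num

lemma bellFactor_eq (σ k : Fin 4) :
    bellFactor σ k = !![1,1,1,1; 1,-1,1,-1; -1,1,1,-1; 1,1,-1,-1] σ k := by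
  fin_cases σ <;> fin_cases k <;>
    simp [bellFactor, Matrix.trace, Matrix.mul_apply, Fintype.sum_prod_type,
      Fin.sum_univ_succ, bellProj, bellVec, pauliM, Matrix.kroneckerMap,
      Complex.conj_ofReal, map_inv₀] <;>
    norm_num [sq2, Matrix.vecHead, Matrix.vecTail]

set_option maxHeartbeats 2000000 in
lemma pauli_kron (σ : Fin 4) (p q : Fin 2 × Fin 2) :
    (pauliM σ ⊗ₖ pauliM σ) p q = ∑ j : Fin 4, bellFactor σ j * bellProj j p q := by
  obtain ⟨p1, p2⟩ := p; obtain ⟨q1, q2⟩ := q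
  rw [Fin.sum_univ_four]
  fin_cases σ <;>
    simp only [bellFactor_eq] <;>
  fin_cases p1 <;> fin_cases p2 <;> fin_cases q1 <;> fin_cases q2 <;>
    norm_num [bellProj, bellVec, pauliM, Matrix.kroneckerMap, sq2,
      Complex.conj_ofReal, map_inv₀, Matrix.vecHead, Matrix.vecTail, Fin.ext_iff,
        Matrix.cons_val_two, Matrix.cons_val_three]

lemma bellFactor_pm (σ k : Fin 4) : bellFactor σ k = 1 ∨ bellFactor σ k = -1 := by
  rw [bellFactor_eq]
  fin_cases σ <;> fin_cases k <;> norm_num [Matrix.vecHead, Matrix.vecTail]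

lemma sum_proj_eq {n : ℕ} (a : Fin n → Fin 4) :
    (∑ b : Fin n → Fin 4, (∏ k, bellFactor (a k) (b k)) • bellOutcomeProj b)
      = twoCopies (nPauli a) := by
  ext p q
  simp only [Matrix.sum_apply, Matrix.smul_apply, smul_eq_mul, bellOutcomeProj,
    ← Finset.prod_mul_distrib]
  rw [← Fintype.piFinset_univ,
    Finset.sum_prod_piFinset Finset.univ
      (fun k j => bellFactor (a k) j * bellProj j (p.1 k, p.2 k) (q.1 k, q.2 k))]
  simp only [twoCopies, nPauli, ← Finset.prod_mul_distrib]
  refine Finset.prod_congr rfl fun k _ => ?_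
  have := pauli_kron (a k) (p.1 k, p.2 k) (q.1 k, q.2 k)
  simpa [Matrix.kroneckerMap] using this.symm

lemma trace_twoCopies_mul {n : ℕ} (A B : Matrix (Fin n → Fin 2) (Fin n → Fin 2) ℂ) :
    (twoCopies A * twoCopies B).trace = ((A * B).trace) ^ 2 := by
  simp only [Matrix.trace, Matrix.mul_apply, twoCopies, Matrix.diag_apply,
    Fintype.sum_prod_type, sq]
  rw [Finset.sum_mul_sum]
  refine Finset.sum_congr rfl fun x _ => ?_
  refine Finset.sum_congr rfl fun y _ => ?_
  rw [Finset.sum_mul_sum]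
  refine Finset.sum_congr rfl fun z _ => ?_
  refine Finset.sum_congr rfl fun w _ => ?_
  ring

lemma pauliM_conj (σ : Fin 4) (x y : Fin 2) :
    (starRingEnd ℂ) (pauliM σ x y) = pauliM σ y x := by
  fin_cases σ <;> fin_cases x <;> fin_cases y <;>
    simp [pauliM, Matrix.one_apply, Complex.ext_iff]

lemma nPauli_herm {n : ℕ} (a : Fin n → Fin 4) : (nPauli a)ᴴ = nPauli a := by
  ext x y
  simp only [Matrix.conjTranspose_apply, nPauli, star_prod, Complex.star_def, pauliM_conj]

/-- Bell-basis measurement of `ρ ⊗ ρ` on each of the `n` qubit pairs: each factor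
`Tr((σ_k ⊗ σ_k) S_k)` is `±1`, and the expectation of their product over the Bell
outcome distribution equals `Tr((P ⊗ P)(ρ ⊗ ρ)) = |Tr(Pρ)|²`. -/
theorem bell_measurement_estimates_pauli_sq {n : ℕ}
    (ρ : Matrix (Fin n → Fin 2) (Fin n → Fin 2) ℂ)
    (hρ : ρ.PosSemidef) (htr : ρ.trace = 1) (a : Fin n → Fin 4) :
    (∀ σ k : Fin 4, bellFactor σ k = 1 ∨ bellFactor σ k = -1) ∧
      ∑ b : Fin n → Fin 4,
          ((bellOutcomeProj b * twoCopies ρ).trace).re * ∏ k, (bellFactor (a k) (b k)).re =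
        ((twoCopies (nPauli a) * twoCopies ρ).trace).re ∧
      ((twoCopies (nPauli a) * twoCopies ρ).trace).re =
        ‖(nPauli a * ρ).trace‖ ^ 2 := by
  refine ⟨bellFactor_pm, ?_, ?_⟩
  · have hre : ∀ σ k : Fin 4, bellFactor σ k = ((bellFactor σ k).re : ℂ) := by
      intro σ k; rcases bellFactor_pm σ k with h | h <;> simp [h]
    calc ∑ b : Fin n → Fin 4,
          ((bellOutcomeProj b * twoCopies ρ).trace).re * ∏ k, (bellFactor (a k) (b k)).re
        = (∑ b : Fin n → Fin 4,
            (∏ k, bellFactor (a k) (b k)) * (bellOutcomeProj b * twoCopies ρ).trace).re := by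
          rw [Complex.re_sum]
          refine Finset.sum_congr rfl fun b _ => ?_
          have : (∏ k, bellFactor (a k) (b k))
              = (((∏ k, (bellFactor (a k) (b k)).re : ℝ)) : ℂ) := by
            rw [Complex.ofReal_prod]
            exact Finset.prod_congr rfl fun k _ => hre _ _
          rw [this, mul_comm, Complex.re_ofReal_mul]
      _ = ((twoCopies (nPauli a) * twoCopies ρ).trace).re := by
          congr 1
          calc ∑ b : Fin n → Fin 4,
                (∏ k, bellFactor (a k) (b k)) * (bellOutcomeProj b * twoCopies ρ).trace
              = ((∑ b : Fin n → Fin 4,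
                  (∏ k, bellFactor (a k) (b k)) • bellOutcomeProj b) * twoCopies ρ).trace := by
                simp [Matrix.sum_mul, Matrix.smul_mul, Matrix.trace_sum, Matrix.trace_smul,
                  smul_eq_mul]
            _ = _ := by rw [sum_proj_eq]
  · rw [trace_twoCopies_mul]
    set t := (nPauli a * ρ).trace with ht
    have hc : (starRingEnd ℂ) t = t := by
      have h1 : (nPauli a * ρ)ᴴ = ρ * nPauli a := by
        rw [Matrix.conjTranspose_mul, nPauli_herm, hρ.1.eq]
      calc (starRingEnd ℂ) t = ((nPauli a * ρ)ᴴ).trace := by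
            rw [Matrix.trace_conjTranspose]; rfl
        _ = t := by rw [h1, Matrix.trace_mul_comm]
    have him : t.im = 0 := by
      have h := congrArg Complex.im hc
      simp only [Complex.conj_im] at h
      linarith
    rw [Complex.sq_norm]
    simp [pow_two, Complex.mul_re, Complex.normSq_apply, him]
end

section
/- Let p₁ and p₂ be the joint distributions of N adaptive rank-one POVM outcomes when the underlying state is the maximally mixed state I/2^n, respectively ρ_a = (I + P_a)/2^n for a uniformly random non-identity Pauli P_a. Then the total variation distance satisfies TV(p₁, p₂) ≤ 2N/(2^n + 1)^{1/3}. -/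
open Matrix BigOperators

/-- The expectation value `⟨ψ|M|ψ⟩`. -/
noncomputable def expval {d : Type*} [Fintype d] (ψ : d → ℂ) (M : Matrix d d ℂ) : ℂ :=
  ∑ x, ∑ y, (starRingEnd ℂ) (ψ x) * M x y * ψ y

lemma pauli_col (m : Fin 4) (y y' : Fin 2) :
    ∑ x : Fin 2, (starRingEnd ℂ) (pauliM m x y) * pauliM m x y' =
      if y = y' then 1 else 0 := by
  fin_cases m <;> fin_cases y <;> fin_cases y' <;>
    simp [pauliM, Fin.sum_univ_two, Matrix.one_apply] <;> ring

lemma pauli_orth (x y x' y' : Fin 2) :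
    ∑ m : Fin 4, pauliM m x y * (starRingEnd ℂ) (pauliM m x' y') =
      if x = x' ∧ y = y' then 2 else 0 := by
  fin_cases x <;> fin_cases y <;> fin_cases x' <;> fin_cases y' <;>
    simp [pauliM, Fin.sum_univ_four, Matrix.one_apply] <;> ring

lemma pauli_tr (m : Fin 4) (hm : m ≠ 0) : ∑ x : Fin 2, pauliM m x x = 0 := by
  fin_cases m <;> simp [pauliM, Fin.sum_univ_two] at hm ⊢

lemma sum_pi_prod {n : ℕ} {τ : Type*} [Fintype τ] [DecidableEq τ]
    (f : Fin n → τ → ℂ) :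
    ∑ x : Fin n → τ, ∏ i, f i (x i) = ∏ i, ∑ c, f i c := by
  rw [Finset.prod_univ_sum, Fintype.piFinset_univ]

lemma prod_ite_eq {n : ℕ} (y y' : Fin n → Fin 2) :
    (∏ i, if y i = y' i then (1:ℂ) else 0) = if y = y' then 1 else 0 := by
  by_cases h : y = y'
  · simp [h]
  · obtain ⟨i, hi⟩ := Function.ne_iff.mp h
    rw [if_neg h]
    exact Finset.prod_eq_zero (Finset.mem_univ i) (by simp [hi])

lemma nPauli_col {n : ℕ} (a : Fin n → Fin 4) (y y' : Fin n → Fin 2) :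
    ∑ x : Fin n → Fin 2, (starRingEnd ℂ) (nPauli a x y) * nPauli a x y' =
      if y = y' then 1 else 0 := by
  have h1 : ∀ x : Fin n → Fin 2, (starRingEnd ℂ) (nPauli a x y) * nPauli a x y' =
      ∏ i, (starRingEnd ℂ) (pauliM (a i) (x i) (y i)) * pauliM (a i) (x i) (y' i) := by
    intro x; simp [nPauli, map_prod, Finset.prod_mul_distrib]
  rw [Finset.sum_congr rfl fun x _ => h1 x,
    sum_pi_prod (fun i c => (starRingEnd ℂ) (pauliM (a i) c (y i)) * pauliM (a i) c (y' i)),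
    Finset.prod_congr rfl fun i _ => pauli_col (a i) (y i) (y' i), prod_ite_eq]

lemma nPauli_tr {n : ℕ} (a : Fin n → Fin 4) (ha : a ≠ fun _ => 0) :
    ∑ x : Fin n → Fin 2, nPauli a x x = 0 := by
  have h1 : ∑ x : Fin n → Fin 2, nPauli a x x = ∏ i, ∑ c : Fin 2, pauliM (a i) c c :=
    sum_pi_prod (fun i c => pauliM (a i) c c)
  obtain ⟨i, hi⟩ := Function.ne_iff.mp ha
  rw [h1]
  exact Finset.prod_eq_zero (Finset.mem_univ i) (pauli_tr (a i) hi)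

lemma nPauli_orth {n : ℕ} (x y x' y' : Fin n → Fin 2) :
    ∑ a : Fin n → Fin 4, nPauli a x y * (starRingEnd ℂ) (nPauli a x' y') =
      if x = x' ∧ y = y' then (2:ℂ)^n else 0 := by
  have h1 : ∀ a : Fin n → Fin 4, nPauli a x y * (starRingEnd ℂ) (nPauli a x' y') =
      ∏ i, pauliM (a i) (x i) (y i) * (starRingEnd ℂ) (pauliM (a i) (x' i) (y' i)) := by
    intro a; simp [nPauli, map_prod, Finset.prod_mul_distrib]
  rw [Finset.sum_congr rfl fun a _ => h1 a,
    sum_pi_prod (fun i m => pauliM m (x i) (y i) * (starRingEnd ℂ) (pauliM m (x' i) (y' i))),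
    Finset.prod_congr rfl fun i _ => pauli_orth (x i) (y i) (x' i) (y' i)]
  by_cases h : x = x' ∧ y = y'
  · simp [h.1, h.2, Finset.prod_const, Finset.card_univ]
  · rw [if_neg h]
    have : ∃ i, ¬(x i = x' i ∧ y i = y' i) := by
      by_contra hc
      push_neg at hc
      exact h ⟨funext fun i => (hc i).1, funext fun i => (hc i).2⟩
    obtain ⟨i, hi⟩ := this
    exact Finset.prod_eq_zero (Finset.mem_univ i) (by simp [hi])

lemma nPauli_zero {n : ℕ} (x y : Fin n → Fin 2) :
    nPauli (fun _ => (0 : Fin 4)) x y = if x = y then 1 else 0 := by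
  have : nPauli (fun _ => (0:Fin 4)) x y = ∏ i, if x i = y i then (1:ℂ) else 0 := by
    unfold nPauli
    exact Finset.prod_congr rfl fun i _ => by simp [pauliM, Matrix.one_apply]
  rw [this, prod_ite_eq]

lemma abs_expval_le {d : Type*} [Fintype d] [DecidableEq d] (ψ : d → ℂ)
    (hψ : ∑ x, ‖ψ x‖ ^ 2 = 1) (M : Matrix d d ℂ)
    (hM : ∀ y y', ∑ x, (starRingEnd ℂ) (M x y) * M x y' = if y = y' then 1 else 0) :
    ‖expval ψ M‖ ≤ 1 := by
  classical
  set u : EuclideanSpace ℂ d := WithLp.toLp 2 ψ with hu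
  set v : EuclideanSpace ℂ d := WithLp.toLp 2 (fun x => ∑ y, M x y * ψ y) with hv
  have hnu : ‖u‖ = 1 := by
    rw [EuclideanSpace.norm_eq]
    have : ∑ x, ‖u x‖ ^ 2 = 1 := by simpa [hu] using hψ
    rw [this, Real.sqrt_one]
  have hsum : ∑ x, ((starRingEnd ℂ) (v x)) * v x = 1 := by
    have h1 : ∀ x, ((starRingEnd ℂ) (v x)) * v x =
        ∑ y, ∑ y', ((starRingEnd ℂ) (M x y) * M x y') * ((starRingEnd ℂ) (ψ y) * ψ y') := by
      intro x
      show (starRingEnd ℂ) (∑ y, M x y * ψ y) * (∑ y, M x y * ψ y) = _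
      rw [map_sum, Finset.sum_mul]
      simp only [Finset.mul_sum]
      refine Finset.sum_congr rfl fun y _ => Finset.sum_congr rfl fun y' _ => ?_
      rw [_root_.map_mul]
      ring
    rw [Finset.sum_congr rfl fun x _ => h1 x, Finset.sum_comm]
    have h2 : ∀ y, ∑ x, ∑ y', ((starRingEnd ℂ) (M x y) * M x y') * ((starRingEnd ℂ) (ψ y) * ψ y')
        = (starRingEnd ℂ) (ψ y) * ψ y := by
      intro y
      rw [Finset.sum_comm]
      have h3 : ∀ y', ∑ x, ((starRingEnd ℂ) (M x y) * M x y') * ((starRingEnd ℂ) (ψ y) * ψ y')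
          = (if y = y' then 1 else 0) * ((starRingEnd ℂ) (ψ y) * ψ y') := by
        intro y'; rw [← Finset.sum_mul, hM]
      rw [Finset.sum_congr rfl fun y' _ => h3 y']
      simp
    rw [Finset.sum_congr rfl fun y _ => h2 y]
    have h4 : ∀ y, (starRingEnd ℂ) (ψ y) * ψ y = ((‖ψ y‖ ^ 2 : ℝ) : ℂ) := by
      intro y
      rw [mul_comm, Complex.mul_conj, Complex.sq_norm]
    rw [Finset.sum_congr rfl fun y _ => h4 y, ← Complex.ofReal_sum, hψ, Complex.ofReal_one]
  have hnv : ‖v‖ = 1 := by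
    rw [EuclideanSpace.norm_eq]
    have : ∑ x, ‖v x‖ ^ 2 = 1 := by
      have h5 := congrArg Complex.re hsum
      rw [Complex.re_sum] at h5
      have h6 : ∀ x, ((starRingEnd ℂ) (v x) * v x).re = ‖v x‖ ^ 2 := by
        intro x
        rw [mul_comm, Complex.mul_conj, Complex.ofReal_re, Complex.normSq_eq_norm_sq]
      rw [Finset.sum_congr rfl fun x _ => h6 x] at h5
      simpa using h5
    rw [this, Real.sqrt_one]
  have hiv : expval ψ M = inner ℂ u v := by
    rw [PiLp.inner_apply]
    unfold expval
    refine Finset.sum_congr rfl fun x _ => ?_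
    simp only [RCLike.inner_apply]
    show _ = (∑ y, M x y * ψ y) * (starRingEnd ℂ) (ψ x)
    rw [Finset.sum_mul]
    exact Finset.sum_congr rfl fun y _ => by ring
  calc ‖expval ψ M‖ = ‖inner ℂ u v‖ := by rw [hiv]
    _ ≤ ‖u‖ * ‖v‖ := norm_inner_le_norm (𝕜 := ℂ) u v
    _ = 1 := by rw [hnu, hnv, one_mul]

lemma sum_sq_expval {n : ℕ} (ψ : (Fin n → Fin 2) → ℂ)
    (hψ : ∑ x, ‖ψ x‖ ^ 2 = 1) :
    ∑ a : Fin n → Fin 4, ‖expval ψ (nPauli a)‖ ^ 2 = (2:ℝ)^n := by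
  classical
  have hE : ∀ a, expval ψ (nPauli a) =
      ∑ p : (Fin n → Fin 2) × (Fin n → Fin 2), (starRingEnd ℂ) (ψ p.1) * nPauli a p.1 p.2 * ψ p.2 := by
    intro a
    rw [Fintype.sum_prod_type]
    rfl
  have key : ∑ a : Fin n → Fin 4,
      expval ψ (nPauli a) * (starRingEnd ℂ) (expval ψ (nPauli a)) = (2:ℂ)^n := by
    have h1 : ∀ a, expval ψ (nPauli a) * (starRingEnd ℂ) (expval ψ (nPauli a)) =
        ∑ p : (Fin n → Fin 2) × (Fin n → Fin 2), ∑ q : (Fin n → Fin 2) × (Fin n → Fin 2),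
          (nPauli a p.1 p.2 * (starRingEnd ℂ) (nPauli a q.1 q.2)) *
          ((starRingEnd ℂ) (ψ p.1) * ψ p.2 * ψ q.1 * (starRingEnd ℂ) (ψ q.2)) := by
      intro a
      rw [hE, map_sum, Finset.sum_mul_sum]
      refine Finset.sum_congr rfl fun p _ => Finset.sum_congr rfl fun q _ => ?_
      simp only [_root_.map_mul, RingHomCompTriple.comp_apply, RingHom.id_apply]
      ring
    rw [Finset.sum_congr rfl fun a _ => h1 a, Finset.sum_comm,
      Finset.sum_congr rfl fun p _ => Finset.sum_comm]
    have h2 : ∀ p : (Fin n → Fin 2) × (Fin n → Fin 2), ∑ q : (Fin n → Fin 2) × (Fin n → Fin 2), ∑ a : Fin n → Fin 4,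
        (nPauli a p.1 p.2 * (starRingEnd ℂ) (nPauli a q.1 q.2)) *
          ((starRingEnd ℂ) (ψ p.1) * ψ p.2 * ψ q.1 * (starRingEnd ℂ) (ψ q.2)) =
        (2:ℂ)^n * ((starRingEnd ℂ) (ψ p.1) * ψ p.2 * ψ p.1 * (starRingEnd ℂ) (ψ p.2)) := by
      intro p
      have h3 : ∀ q : (Fin n → Fin 2) × (Fin n → Fin 2), ∑ a : Fin n → Fin 4,
          (nPauli a p.1 p.2 * (starRingEnd ℂ) (nPauli a q.1 q.2)) *
            ((starRingEnd ℂ) (ψ p.1) * ψ p.2 * ψ q.1 * (starRingEnd ℂ) (ψ q.2)) =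
          (if p = q then (2:ℂ)^n else 0) *
            ((starRingEnd ℂ) (ψ p.1) * ψ p.2 * ψ q.1 * (starRingEnd ℂ) (ψ q.2)) := by
        intro q
        rw [← Finset.sum_mul, nPauli_orth]
        congr 1
        simp [Prod.ext_iff]
      rw [Finset.sum_congr rfl fun q _ => h3 q]
      simp only [ite_mul, zero_mul]
      rw [Finset.sum_ite_eq]
      simp
    rw [Finset.sum_congr rfl fun p _ => h2 p, ← Finset.mul_sum]
    have hψ1 : ∑ x : (Fin n → Fin 2), (starRingEnd ℂ) (ψ x) * ψ x = 1 := by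
      have hc : ∀ x : (Fin n → Fin 2), (starRingEnd ℂ) (ψ x) * ψ x = ((‖ψ x‖ ^ 2 : ℝ) : ℂ) :=
        fun x => by rw [mul_comm, Complex.mul_conj, Complex.sq_norm]
      rw [Finset.sum_congr rfl fun x _ => hc x, ← Complex.ofReal_sum, hψ, Complex.ofReal_one]
    have h4 : ∑ p : (Fin n → Fin 2) × (Fin n → Fin 2),
        (starRingEnd ℂ) (ψ p.1) * ψ p.2 * ψ p.1 * (starRingEnd ℂ) (ψ p.2) = 1 := by
      rw [Fintype.sum_prod_type]
      have h5 : ∀ x : (Fin n → Fin 2), ∑ y : (Fin n → Fin 2), (starRingEnd ℂ) (ψ x) * ψ y * ψ x * (starRingEnd ℂ) (ψ y) =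
          ((starRingEnd ℂ) (ψ x) * ψ x) * ∑ y : (Fin n → Fin 2), (starRingEnd ℂ) (ψ y) * ψ y := by
        intro x
        rw [Finset.mul_sum]
        exact Finset.sum_congr rfl fun y _ => by ring
      rw [Finset.sum_congr rfl fun x _ => h5 x, ← Finset.sum_mul, hψ1, one_mul]
    rw [h4, mul_one]
  have habs : ∀ a, ((‖expval ψ (nPauli a)‖ ^ 2 : ℝ) : ℂ) =
      expval ψ (nPauli a) * (starRingEnd ℂ) (expval ψ (nPauli a)) := by
    intro a
    rw [Complex.mul_conj, Complex.sq_norm]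
  have : ((∑ a : Fin n → Fin 4, ‖expval ψ (nPauli a)‖ ^ 2 : ℝ) : ℂ) = ((2:ℝ)^n : ℂ) := by
    rw [Complex.ofReal_sum, Finset.sum_congr rfl fun a _ => habs a, key]
    push_cast
    ring
  exact_mod_cast this

lemma expval_pauli_zero {n : ℕ} (ψ : (Fin n → Fin 2) → ℂ)
    (hψ : ∑ x, ‖ψ x‖ ^ 2 = 1) :
    expval ψ (nPauli (fun _ => (0 : Fin 4))) = 1 := by
  unfold expval
  have h1 : ∀ x : Fin n → Fin 2, ∑ y, (starRingEnd ℂ) (ψ x) * nPauli (fun _ => (0:Fin 4)) x y * ψ y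
      = (starRingEnd ℂ) (ψ x) * ψ x := by
    intro x
    rw [Finset.sum_eq_single x]
    · rw [nPauli_zero, if_pos rfl, mul_one]
    · intro y _ hy; rw [nPauli_zero, if_neg (Ne.symm hy)]; ring
    · intro h; exact absurd (Finset.mem_univ x) h
  rw [Finset.sum_congr rfl fun x _ => h1 x]
  have hc : ∀ x : Fin n → Fin 2, (starRingEnd ℂ) (ψ x) * ψ x = ((‖ψ x‖ ^ 2 : ℝ) : ℂ) :=
    fun x => by rw [mul_comm, Complex.mul_conj, Complex.sq_norm]
  rw [Finset.sum_congr rfl fun x _ => hc x, ← Complex.ofReal_sum, hψ, Complex.ofReal_one]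

lemma count_bad {n : ℕ} (ψ : (Fin n → Fin 2) → ℂ)
    (hψ : ∑ x, ‖ψ x‖ ^ 2 = 1) :
    ((Finset.univ.filter (fun a : Fin n → Fin 4 => a ≠ (fun _ => 0) ∧
        ((2:ℝ)^n + 1) ^ (-(1/3) : ℝ) < |(expval ψ (nPauli a)).re|)).card : ℝ) ≤
      ((4:ℝ)^n - 1) * ((2:ℝ)^n + 1) ^ (-(1/3) : ℝ) := by
  classical
  set t : ℝ := (2:ℝ)^n + 1 with ht
  have ht0 : 0 < t := by positivity
  set ε : ℝ := t ^ (-(1/3) : ℝ) with hε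
  have hε0 : 0 < ε := Real.rpow_pos_of_pos ht0 _
  set S := Finset.univ.filter (fun a : Fin n → Fin 4 => a ≠ (fun _ => 0) ∧
      ε < |(expval ψ (nPauli a)).re|) with hS
  set T := Finset.univ.filter (fun a : Fin n → Fin 4 => a ≠ (fun _ => 0)) with hT
  -- sum over T of abs^2 = 2^n - 1
  have hTsum : ∑ a ∈ T, ‖expval ψ (nPauli a)‖ ^ 2 = (2:ℝ)^n - 1 := by
    have h0 : T = Finset.univ.erase (fun _ => (0 : Fin 4)) := by
      rw [hT, Finset.filter_ne']
    rw [h0, Finset.sum_erase_eq_sub (Finset.mem_univ _), sum_sq_expval ψ hψ,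
      expval_pauli_zero ψ hψ]
    norm_num
  -- card bound
  have hST : S ⊆ T := by
    rw [hS, hT]
    intro a ha
    rw [Finset.mem_filter] at ha ⊢
    exact ⟨ha.1, ha.2.1⟩
  have hcard : (S.card : ℝ) * ε ^ 2 ≤ (2:ℝ)^n - 1 := by
    calc (S.card : ℝ) * ε ^ 2 = ∑ _a ∈ S, ε ^ 2 := by rw [Finset.sum_const, nsmul_eq_mul]
      _ ≤ ∑ a ∈ S, ‖expval ψ (nPauli a)‖ ^ 2 := by
          refine Finset.sum_le_sum fun a ha => ?_
          rw [hS, Finset.mem_filter] at ha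
          have h1 : ε ^ 2 ≤ (expval ψ (nPauli a)).re ^ 2 := by
            have := ha.2.2
            nlinarith [abs_nonneg (expval ψ (nPauli a)).re, sq_abs (expval ψ (nPauli a)).re]
          refine h1.trans ?_
          nlinarith [Complex.sq_norm_sub_sq_re (expval ψ (nPauli a)), sq_nonneg (expval ψ (nPauli a)).im]
      _ ≤ ∑ a ∈ T, ‖expval ψ (nPauli a)‖ ^ 2 := by
          refine Finset.sum_le_sum_of_subset_of_nonneg hST fun a _ _ => by positivity
      _ = (2:ℝ)^n - 1 := hTsum
  -- algebra: (2^n-1)/ε² = (4^n-1)ε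
  have hεsq : ε ^ 2 = t ^ (-(2/3) : ℝ) := by
    rw [hε, ← Real.rpow_natCast (t ^ (-(1/3):ℝ)) 2, ← Real.rpow_mul ht0.le]
    norm_num
  have hkey : ((4:ℝ)^n - 1) * ε = ((2:ℝ)^n - 1) * t ^ ((2/3) : ℝ) := by
    have h4 : (4:ℝ)^n = (2:ℝ)^n * (2:ℝ)^n := by rw [← mul_pow]; norm_num
    have h1 : ((4:ℝ)^n - 1) = ((2:ℝ)^n - 1) * t := by rw [ht]; rw [h4]; ring
    rw [h1, mul_assoc, hε, ← Real.rpow_one_add' ht0.le (by norm_num)]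
    norm_num
  have h2n1 : (0:ℝ) ≤ (2:ℝ)^n - 1 := by
    have : (1:ℝ) ≤ (2:ℝ)^n := one_le_pow₀ (by norm_num)
    linarith
  rw [hkey]
  have hfin : (S.card : ℝ) = (S.card : ℝ) * ε ^ 2 * t ^ ((2/3) : ℝ) := by
    rw [hεsq, mul_assoc, ← Real.rpow_add ht0]
    norm_num
  rw [hfin]
  exact mul_le_mul_of_nonneg_right hcard (Real.rpow_nonneg ht0.le _)

lemma telescope {O : Type*} [Fintype O] [Nonempty O] {N : ℕ}
    (g : Fin N → (Fin N → O) → O → ℝ)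
    (hrow : ∀ i o, ∑ j, g i o j = 1)
    (hadapt : ∀ (i : Fin N) o o', (∀ j, j < i → o j = o' j) → g i o = g i o') :
    ∑ o : Fin N → O, ∏ i, g i o (o i) = 1 := by
  classical
  have main : ∀ k : ℕ, k ≤ N →
      ∑ o : Fin N → O, ∏ i ∈ Finset.univ.filter (fun i : Fin N => (i:ℕ) < k), g i o (o i)
        = (Fintype.card O : ℝ) ^ (N - k) := by
    intro k
    induction k with
    | zero =>
      intro _
      simp only [Nat.not_lt_zero, Finset.filter_false, Finset.prod_empty]
      rw [Finset.sum_const, Finset.card_univ, nsmul_eq_mul, mul_one, Fintype.card_fun]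
      push_cast
      simp
    | succ k ih =>
      intro hk1
      have hk : k ≤ N := le_of_lt hk1
      have ihk := ih hk
      set κ : Fin N := ⟨k, hk1⟩ with hκ
      have hsplit : ∀ o : Fin N → O,
          (∏ i ∈ Finset.univ.filter (fun i : Fin N => (i:ℕ) < k + 1), g i o (o i)) =
          g κ o (o κ) * ∏ i ∈ Finset.univ.filter (fun i : Fin N => (i:ℕ) < k), g i o (o i) := by
        intro o
        have h1 : Finset.univ.filter (fun i : Fin N => (i:ℕ) < k + 1) =
            insert κ (Finset.univ.filter (fun i : Fin N => (i:ℕ) < k)) := by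
          ext i
          simp only [Finset.mem_filter, Finset.mem_insert, Finset.mem_univ, true_and]
          constructor
          · intro h
            rcases Nat.lt_succ_iff_lt_or_eq.mp h with h | h
            · exact Or.inr h
            · exact Or.inl (Fin.ext h)
          · rintro (rfl | h)
            · exact Nat.lt_succ_self _
            · exact Nat.lt_succ_of_lt h
        rw [h1, Finset.prod_insert (by simp [hκ])]
      rw [Finset.sum_congr rfl fun o _ => hsplit o]
      set e := Equiv.funSplitAt κ O with he
      have hsum : ∀ F : (Fin N → O) → ℝ, ∑ o : Fin N → O, F o =
          ∑ r : { j : Fin N // j ≠ κ } → O, ∑ x : O, F (e.symm (x, r)) := by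
        intro F
        rw [← Equiv.sum_comp e.symm F, Fintype.sum_prod_type, Finset.sum_comm]
      set x₀ : O := Classical.arbitrary O with hx₀
      set o₀ : ({ j : Fin N // j ≠ κ } → O) → (Fin N → O) := fun r => e.symm (x₀, r) with ho₀
      have hcoord : ∀ (x : O) (r : { j : Fin N // j ≠ κ } → O) (j : Fin N), j ≠ κ →
          (e.symm (x, r)) j = o₀ r j := by
        intro x r j hj
        rw [ho₀, he]
        simp [Equiv.funSplitAt_symm_apply, dif_neg hj]
      have hκcoord : ∀ (x : O) (r : { j : Fin N // j ≠ κ } → O), (e.symm (x, r)) κ = x := by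
        intro x r
        rw [he]
        simp [Equiv.funSplitAt_symm_apply]
      have hgi : ∀ (x : O) (r : { j : Fin N // j ≠ κ } → O) (i : Fin N), (i:ℕ) < k →
          g i (e.symm (x, r)) (e.symm (x, r) i) = g i (o₀ r) (o₀ r i) := by
        intro x r i hi
        have hiκ : i ≠ κ := by
          intro hh; rw [hh] at hi; exact lt_irrefl _ hi
        have hj' : ∀ j : Fin N, j < i → j ≠ κ := by
          intro j hj hh
          rw [hh] at hj
          have h2 : (k:ℕ) < (i:ℕ) := hj
          omega
        rw [hcoord x r i hiκ,
          hadapt i (e.symm (x, r)) (o₀ r) fun j hj => hcoord x r j (hj' j hj)]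
      have hgκ : ∀ (x : O) (r : { j : Fin N // j ≠ κ } → O),
          g κ (e.symm (x, r)) = g κ (o₀ r) := by
        intro x r
        exact hadapt κ _ _ fun j hj => hcoord x r j (by
          intro hh; rw [hh] at hj; exact lt_irrefl _ hj)
      -- evaluate LHS
      have hL : ∑ o : Fin N → O, g κ o (o κ) *
            ∏ i ∈ Finset.univ.filter (fun i : Fin N => (i:ℕ) < k), g i o (o i) =
          ∑ r, ∏ i ∈ Finset.univ.filter (fun i : Fin N => (i:ℕ) < k), g i (o₀ r) (o₀ r i) := by
        rw [hsum]
        refine Finset.sum_congr rfl fun r _ => ?_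
        have : ∀ x : O, g κ (e.symm (x, r)) (e.symm (x, r) κ) *
              ∏ i ∈ Finset.univ.filter (fun i : Fin N => (i:ℕ) < k),
                g i (e.symm (x, r)) (e.symm (x, r) i) =
            g κ (o₀ r) x * ∏ i ∈ Finset.univ.filter (fun i : Fin N => (i:ℕ) < k),
                g i (o₀ r) (o₀ r i) := by
          intro x
          rw [hκcoord x r, hgκ x r]
          congr 1
          exact Finset.prod_congr rfl fun i hi => hgi x r i (Finset.mem_filter.mp hi).2
        rw [Finset.sum_congr rfl fun x _ => this x, ← Finset.sum_mul, hrow κ (o₀ r), one_mul]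
      -- evaluate ihk similarly
      have hR : (Fintype.card O : ℝ) ^ (N - k) = (Fintype.card O : ℝ) *
          ∑ r, ∏ i ∈ Finset.univ.filter (fun i : Fin N => (i:ℕ) < k), g i (o₀ r) (o₀ r i) := by
        rw [← ihk, hsum]
        rw [Finset.mul_sum]
        refine Finset.sum_congr rfl fun r _ => ?_
        have : ∀ x : O, ∏ i ∈ Finset.univ.filter (fun i : Fin N => (i:ℕ) < k),
              g i (e.symm (x, r)) (e.symm (x, r) i) =
            ∏ i ∈ Finset.univ.filter (fun i : Fin N => (i:ℕ) < k), g i (o₀ r) (o₀ r i) := by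
          intro x
          exact Finset.prod_congr rfl fun i hi => hgi x r i (Finset.mem_filter.mp hi).2
        rw [Finset.sum_congr rfl fun x _ => this x, Finset.sum_const, Finset.card_univ,
          nsmul_eq_mul]
      rw [hL]
      have hc : (0:ℝ) < (Fintype.card O : ℝ) := by
        exact_mod_cast Fintype.card_pos
      have hNk : N - k = (N - (k + 1)) + 1 := by omega
      rw [hNk, pow_succ] at hR
      have := hR
      exact mul_left_cancel₀ hc.ne' (by linear_combination -this)
  have := main N le_rfl
  have hfil : Finset.univ.filter (fun i : Fin N => (i:ℕ) < N) = Finset.univ := by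
    ext i; simp [i.isLt]
  rw [hfil] at this
  simpa using this

lemma half_abs {α : Type*} [Fintype α] (f : α → ℝ) (h : ∑ x, f x = 0) :
    (1/2 : ℝ) * ∑ x, |f x| = ∑ x, max (f x) 0 := by
  have habs : ∀ x, |f x| = 2 * max (f x) 0 - f x := fun x => by
    rcases le_total (f x) 0 with h'|h'
    · rw [max_eq_right h', abs_of_nonpos h']; ring
    · rw [max_eq_left h', abs_of_nonneg h']; ring
  rw [Finset.sum_congr rfl fun x _ => habs x, Finset.sum_sub_distrib, h, sub_zero,
    ← Finset.mul_sum]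
  ring

lemma povm_expval {n : ℕ} {O : Type*} [Fintype O] (w : O → ℝ) (ψ : O → (Fin n → Fin 2) → ℂ)
    (hP : ∑ j, ((w j : ℂ) * 2 ^ n) •
      Matrix.vecMulVec (ψ j) (fun x => (starRingEnd ℂ) (ψ j x)) = 1)
    (a : Fin n → Fin 4) (ha : a ≠ fun _ => 0) :
    ∑ j, w j * (expval (ψ j) (nPauli a)).re = 0 := by
  classical
  have h2n : ((2:ℂ)^n) ≠ 0 := pow_ne_zero _ two_ne_zero
  have hent : ∀ x y : Fin n → Fin 2,
      ∑ j, (w j : ℂ) * ((starRingEnd ℂ) (ψ j x) * ψ j y) =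
        ((2:ℂ)^n)⁻¹ * (if y = x then 1 else 0) := by
    intro x y
    have h1 := congrFun (congrFun hP y) x
    simp only [Matrix.sum_apply, Matrix.smul_apply, Matrix.vecMulVec_apply, Matrix.one_apply,
      smul_eq_mul] at h1
    have h2 : ∑ j, (w j : ℂ) * ((starRingEnd ℂ) (ψ j x) * ψ j y) =
        ((2:ℂ)^n)⁻¹ * ∑ j, (w j : ℂ) * 2 ^ n * (ψ j y * (starRingEnd ℂ) (ψ j x)) := by
      rw [Finset.mul_sum]
      refine Finset.sum_congr rfl fun j _ => ?_
      field_simp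
    rw [h2, h1]
  have key : ∑ j, (w j : ℂ) * expval (ψ j) (nPauli a) = 0 := by
    have h3 : ∀ j, (w j : ℂ) * expval (ψ j) (nPauli a) =
        ∑ x, ∑ y, nPauli a x y * ((w j : ℂ) * ((starRingEnd ℂ) (ψ j x) * ψ j y)) := by
      intro j
      unfold expval
      rw [Finset.mul_sum]
      refine Finset.sum_congr rfl fun x _ => ?_
      rw [Finset.mul_sum]
      exact Finset.sum_congr rfl fun y _ => by ring
    rw [Finset.sum_congr rfl fun j _ => h3 j, Finset.sum_comm]
    have h4 : ∀ x, ∑ j : O, ∑ y, nPauli a x y * ((w j : ℂ) * ((starRingEnd ℂ) (ψ j x) * ψ j y)) =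
        nPauli a x x * ((2:ℂ)^n)⁻¹ := by
      intro x
      rw [Finset.sum_comm]
      have h5 : ∀ y, ∑ j : O, nPauli a x y * ((w j : ℂ) * ((starRingEnd ℂ) (ψ j x) * ψ j y)) =
          nPauli a x y * (((2:ℂ)^n)⁻¹ * (if y = x then 1 else 0)) := by
        intro y
        rw [← hent x y, Finset.mul_sum]
      rw [Finset.sum_congr rfl fun y _ => h5 y]
      rw [Finset.sum_eq_single x]
      · rw [if_pos rfl, mul_one]
      · intro y _ hy; rw [if_neg hy, mul_zero, mul_zero]
      · intro h; exact absurd (Finset.mem_univ x) h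
    rw [Finset.sum_congr rfl fun x _ => h4 x, ← Finset.sum_mul, nPauli_tr a ha, zero_mul]
  have := congrArg Complex.re key
  rw [Complex.re_sum] at this
  simpa [Complex.re_ofReal_mul] using this

/-- Hypothesis-testing bound for adaptive single-copy rank-one POVM measurements:
`p₁` is the outcome distribution under the maximally mixed state `I/2ⁿ`,
`p₂(o) = (4ⁿ−1)⁻¹ Σ_a ∏ᵢ wᵢ(o)(oᵢ)(1 + ⟨ψᵢ|P_a|ψᵢ⟩)` the distribution under
`ρ_a = (I + P_a)/2ⁿ` for a uniformly random non-identity Pauli `P_a`.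
At step `i`, the POVM `{wᵢ 2ⁿ |ψᵢ⟩⟨ψᵢ|}` may depend adaptively on the past outcomes.
Then `TV(p₁, p₂) ≤ 2N/(2ⁿ + 1)^{1/3}`. -/
theorem adaptive_TV_bound {n N : ℕ} (hn : 0 < n) {O : Type*} [Fintype O]
    (w : Fin N → (Fin N → O) → O → ℝ)
    (ψ : Fin N → (Fin N → O) → O → (Fin n → Fin 2) → ℂ)
    (hw0 : ∀ i o j, 0 ≤ w i o j)
    (hw1 : ∀ i o, ∑ j, w i o j = 1)
    (hψ : ∀ i o j, ∑ x, ‖ψ i o j x‖ ^ 2 = 1)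
    (hPOVM : ∀ i o, ∑ j, ((w i o j : ℂ) * 2 ^ n) •
        Matrix.vecMulVec (ψ i o j) (fun x => (starRingEnd ℂ) (ψ i o j x)) = 1)
    (hadapt_w : ∀ i o o', (∀ j : Fin N, j < i → o j = o' j) → w i o = w i o')
    (hadapt_ψ : ∀ i o o', (∀ j : Fin N, j < i → o j = o' j) → ψ i o = ψ i o') :
    (1 / 2 : ℝ) * ∑ o : Fin N → O,
        |(∏ i, w i o (o i)) -
          ((4 : ℝ) ^ n - 1)⁻¹ *
            ∑ a ∈ Finset.univ.filter (fun a : Fin n → Fin 4 => a ≠ fun _ => 0),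
              ∏ i, w i o (o i) * (1 + (expval (ψ i o (o i)) (nPauli a)).re)| ≤
      2 * N / ((2 : ℝ) ^ n + 1) ^ ((1 : ℝ) / 3) := by
  classical
  have h2n1 : (1:ℝ) ≤ (2:ℝ)^n := one_le_pow₀ (by norm_num)
  have ht0 : (0:ℝ) < (2:ℝ)^n + 1 := by positivity
  have ht1 : (1:ℝ) ≤ (2:ℝ)^n + 1 := by linarith
  set ε : ℝ := ((2:ℝ)^n + 1) ^ (-(1/3) : ℝ) with hεs
  have hε0 : 0 < ε := Real.rpow_pos_of_pos ht0 _
  have hε1 : ε ≤ 1 := Real.rpow_le_one_of_one_le_of_nonpos ht1 (by norm_num)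
  have hRHS : 2 * (N:ℝ) / ((2:ℝ)^n + 1) ^ ((1:ℝ)/3) = 2 * N * ε := by
    rw [hεs, Real.rpow_neg ht0.le]
    ring
  rw [hRHS]
  set K : ℝ := (4:ℝ)^n - 1 with hKs
  set A := Finset.univ.filter (fun a : Fin n → Fin 4 => a ≠ fun _ => 0) with hAs
  have hK0 : 0 < K := by
    have h4 : (4:ℝ)^1 ≤ (4:ℝ)^n := pow_le_pow_right₀ (by norm_num) hn
    rw [hKs]; norm_num at h4 ⊢; linarith
  have hAcard : (A.card : ℝ) = K := by
    have h1 : A = Finset.univ.erase (fun _ => (0:Fin 4)) := by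
      rw [hAs, Finset.filter_ne']
    have h2 : A.card = 4^n - 1 := by
      rw [h1, Finset.card_erase_of_mem (Finset.mem_univ _), Finset.card_univ]
      congr 1
      rw [Fintype.card_fun]
      simp
    rw [h2, hKs]
    have h3 : 1 ≤ 4^n := Nat.one_le_pow _ _ (by norm_num)
    push_cast [Nat.cast_sub h3]
    norm_num
  rcases isEmpty_or_nonempty O with hO | hO
  · rcases Nat.eq_zero_or_pos N with hN | hN
    · subst hN
      have huniq : ∀ o : Fin 0 → O, (∏ i, w i o (o i)) -
          K⁻¹ * ∑ a ∈ A, ∏ i, w i o (o i) * (1 + (expval (ψ i o (o i)) (nPauli a)).re) = 0 := by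
        intro o
        simp only [Finset.univ_eq_empty, Finset.prod_empty, Finset.sum_const, nsmul_eq_mul,
          mul_one]
        rw [hAcard]
        field_simp
        norm_num
      have : ∀ o : Fin 0 → O, |(∏ i, w i o (o i)) -
          K⁻¹ * ∑ a ∈ A, ∏ i, w i o (o i) * (1 + (expval (ψ i o (o i)) (nPauli a)).re)| = 0 :=
        fun o => by rw [huniq o, abs_zero]
      rw [Finset.sum_congr rfl fun o _ => this o, Finset.sum_const]
      simp only [smul_zero, mul_zero]
      positivity
    · have hempty : IsEmpty (Fin N → O) := ⟨fun o => hO.false (o ⟨0, hN⟩)⟩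
      rw [Finset.univ_eq_empty, Finset.sum_empty, mul_zero]
      positivity
  · -- main case: Nonempty O
    have hz1 : ∀ (i : Fin N) (o : Fin N → O) (a : Fin n → Fin 4),
        |(expval (ψ i o (o i)) (nPauli a)).re| ≤ 1 := by
      intro i o a
      exact (Complex.abs_re_le_norm _).trans
        (abs_expval_le (ψ i o (o i)) (hψ i o (o i)) (nPauli a) (nPauli_col a))
    have hP1 : ∑ o : Fin N → O, ∏ i, w i o (o i) = 1 := telescope w hw1 hadapt_w
    have hQ1 : ∀ a ∈ A, ∑ o : Fin N → O,
        (∏ i, w i o (o i) * (1 + (expval (ψ i o (o i)) (nPauli a)).re)) = 1 := by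
      intro a haA
      have ha : a ≠ fun _ => 0 := by
        rw [hAs, Finset.mem_filter] at haA
        exact haA.2
      refine telescope (fun i o j => w i o j * (1 + (expval (ψ i o j) (nPauli a)).re)) ?_ ?_
      · intro i o
        have hz0 := povm_expval (w i o) (ψ i o) (hPOVM i o) a ha
        have hrw : ∀ j, w i o j * (1 + (expval (ψ i o j) (nPauli a)).re)
            = w i o j + w i o j * (expval (ψ i o j) (nPauli a)).re := fun j => by ring
        rw [Finset.sum_congr rfl fun j _ => hrw j, Finset.sum_add_distrib, hw1, hz0, add_zero]
      · intro i o o' h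
        funext j
        rw [hadapt_w i o o' h, hadapt_ψ i o o' h]
    have hsum0 : ∑ o : Fin N → O, ((∏ i, w i o (o i)) -
        K⁻¹ * ∑ a ∈ A, ∏ i, w i o (o i) * (1 + (expval (ψ i o (o i)) (nPauli a)).re)) = 0 := by
      rw [Finset.sum_sub_distrib, hP1, ← Finset.mul_sum, Finset.sum_comm,
        Finset.sum_congr rfl hQ1, Finset.sum_const, nsmul_eq_mul, mul_one, hAcard]
      field_simp
      norm_num
    have hhalf := half_abs (fun o : Fin N → O => (∏ i, w i o (o i)) -
        K⁻¹ * ∑ a ∈ A, ∏ i, w i o (o i) * (1 + (expval (ψ i o (o i)) (nPauli a)).re)) hsum0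
    rw [hhalf]
    have hpt : ∀ o : Fin N → O, max ((∏ i, w i o (o i)) -
        K⁻¹ * ∑ a ∈ A, ∏ i, w i o (o i) * (1 + (expval (ψ i o (o i)) (nPauli a)).re)) 0
        ≤ 2 * N * ε * ∏ i, w i o (o i) := by
      intro o
      have hPpos : (0:ℝ) ≤ ∏ i, w i o (o i) := Finset.prod_nonneg fun i _ => hw0 i o (o i)
      have hqr : ∀ a : Fin n → Fin 4,
          (∏ i, w i o (o i) * (1 + (expval (ψ i o (o i)) (nPauli a)).re))
          = (∏ i, w i o (o i)) * ∏ i, (1 + (expval (ψ i o (o i)) (nPauli a)).re) :=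
        fun a => Finset.prod_mul_distrib
      have hr0 : ∀ a : Fin n → Fin 4,
          (0:ℝ) ≤ ∏ i, (1 + (expval (ψ i o (o i)) (nPauli a)).re) :=
        fun a => Finset.prod_nonneg fun i _ => by
          have h := abs_le.mp (hz1 i o a); linarith [h.1]
      have hbound : ∀ a ∈ A, max (1 - ∏ i, (1 + (expval (ψ i o (o i)) (nPauli a)).re)) 0
          ≤ N * ε + (if ∃ i, ε < |(expval (ψ i o (o i)) (nPauli a)).re| then (1:ℝ) else 0) := by
        intro a _
        by_cases hbad : ∃ i, ε < |(expval (ψ i o (o i)) (nPauli a)).re|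
        · rw [if_pos hbad]
          have h1 : max (1 - ∏ i, (1 + (expval (ψ i o (o i)) (nPauli a)).re)) 0 ≤ 1 :=
            max_le (by linarith [hr0 a]) (by norm_num)
          have h2 : (0:ℝ) ≤ N * ε := by positivity
          linarith
        · rw [if_neg hbad, add_zero]
          push_neg at hbad
          have hgood : (1 - ε)^N ≤ ∏ i, (1 + (expval (ψ i o (o i)) (nPauli a)).re) := by
            have heq : (1 - ε)^N = ∏ _i : Fin N, (1 - ε) := by
              rw [Finset.prod_const, Finset.card_univ, Fintype.card_fin]
            rw [heq]
            refine Finset.prod_le_prod (fun i _ => by linarith) (fun i _ => ?_)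
            have h := abs_le.mp (hbad i)
            linarith [h.1]
          have hBern : 1 - (N:ℝ) * ε ≤ (1 - ε)^N := by
            have h := one_add_mul_le_pow (a := -ε) (by linarith : (-2:ℝ) ≤ -ε) N
            calc 1 - (N:ℝ)*ε = 1 + N * (-ε) := by ring
              _ ≤ (1 + -ε)^N := h
              _ = (1-ε)^N := by ring_nf
          exact max_le (by linarith) (by positivity)
      have hcount : (∑ a ∈ A,
          (if ∃ i, ε < |(expval (ψ i o (o i)) (nPauli a)).re| then (1:ℝ) else 0))
          ≤ N * (K * ε) := by
        rw [Finset.sum_boole]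
        have hsub : A.filter (fun a => ∃ i, ε < |(expval (ψ i o (o i)) (nPauli a)).re|) ⊆
            Finset.univ.biUnion (fun i : Fin N => Finset.univ.filter
              (fun a : Fin n → Fin 4 => a ≠ (fun _ => 0) ∧
                ε < |(expval (ψ i o (o i)) (nPauli a)).re|)) := by
          intro a ha
          rw [Finset.mem_filter] at ha
          obtain ⟨haA, i, hi⟩ := ha
          rw [hAs, Finset.mem_filter] at haA
          exact Finset.mem_biUnion.mpr ⟨i, Finset.mem_univ _,
            Finset.mem_filter.mpr ⟨Finset.mem_univ _, haA.2, hi⟩⟩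
        have h1 := (Finset.card_le_card hsub).trans (Finset.card_biUnion_le)
        calc ((A.filter (fun a => ∃ i, ε < |(expval (ψ i o (o i)) (nPauli a)).re|)).card : ℝ)
            ≤ ∑ i : Fin N, ((Finset.univ.filter (fun a : Fin n → Fin 4 => a ≠ (fun _ => 0) ∧
                ε < |(expval (ψ i o (o i)) (nPauli a)).re|)).card : ℝ) := by exact_mod_cast h1
          _ ≤ ∑ _i : Fin N, K * ε :=
              Finset.sum_le_sum fun i _ => count_bad (ψ i o (o i)) (hψ i o (o i))
          _ = N * (K * ε) := by
              rw [Finset.sum_const, Finset.card_univ, Fintype.card_fin, nsmul_eq_mul]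
      have e1 : (∏ i, w i o (o i)) -
          K⁻¹ * ∑ a ∈ A, ∏ i, w i o (o i) * (1 + (expval (ψ i o (o i)) (nPauli a)).re)
          = K⁻¹ * ∑ a ∈ A, ((∏ i, w i o (o i)) -
            (∏ i, w i o (o i)) * ∏ i, (1 + (expval (ψ i o (o i)) (nPauli a)).re)) := by
        rw [Finset.sum_congr rfl fun a _ => hqr a, Finset.sum_sub_distrib, Finset.sum_const,
          nsmul_eq_mul, hAcard, mul_sub]
        have : K⁻¹ * (K * ∏ i, w i o (o i)) = ∏ i, w i o (o i) := by field_simp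
        rw [this]
      rw [e1]
      have e2 : max (K⁻¹ * ∑ a ∈ A, ((∏ i, w i o (o i)) -
            (∏ i, w i o (o i)) * ∏ i, (1 + (expval (ψ i o (o i)) (nPauli a)).re))) 0
          ≤ K⁻¹ * ∑ a ∈ A, ((∏ i, w i o (o i)) *
            max (1 - ∏ i, (1 + (expval (ψ i o (o i)) (nPauli a)).re)) 0) := by
        have h1 : ∀ a ∈ A, (∏ i, w i o (o i)) -
            (∏ i, w i o (o i)) * ∏ i, (1 + (expval (ψ i o (o i)) (nPauli a)).re)
            ≤ (∏ i, w i o (o i)) *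
              max (1 - ∏ i, (1 + (expval (ψ i o (o i)) (nPauli a)).re)) 0 := by
          intro a _
          have hh : (∏ i, w i o (o i)) -
              (∏ i, w i o (o i)) * ∏ i, (1 + (expval (ψ i o (o i)) (nPauli a)).re)
              = (∏ i, w i o (o i)) *
                (1 - ∏ i, (1 + (expval (ψ i o (o i)) (nPauli a)).re)) := by ring
          rw [hh]
          exact mul_le_mul_of_nonneg_left (le_max_left _ _) hPpos
        have h2 : (0:ℝ) ≤ ∑ a ∈ A, ((∏ i, w i o (o i)) *
            max (1 - ∏ i, (1 + (expval (ψ i o (o i)) (nPauli a)).re)) 0) :=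
          Finset.sum_nonneg fun a _ => mul_nonneg hPpos (le_max_right _ _)
        refine max_le ?_ ?_
        · exact mul_le_mul_of_nonneg_left (Finset.sum_le_sum h1) (inv_nonneg.mpr hK0.le)
        · exact mul_nonneg (inv_nonneg.mpr hK0.le) h2
      refine e2.trans ?_
      have e3 : ∑ a ∈ A, ((∏ i, w i o (o i)) *
            max (1 - ∏ i, (1 + (expval (ψ i o (o i)) (nPauli a)).re)) 0)
          ≤ (∏ i, w i o (o i)) * (K * (N * ε) + N * (K * ε)) := by
        calc ∑ a ∈ A, ((∏ i, w i o (o i)) *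
              max (1 - ∏ i, (1 + (expval (ψ i o (o i)) (nPauli a)).re)) 0)
            ≤ ∑ a ∈ A, ((∏ i, w i o (o i)) * (N * ε +
              (if ∃ i, ε < |(expval (ψ i o (o i)) (nPauli a)).re| then (1:ℝ) else 0))) :=
              Finset.sum_le_sum fun a ha =>
                mul_le_mul_of_nonneg_left (hbound a ha) hPpos
          _ = (∏ i, w i o (o i)) * ∑ a ∈ A, (N * ε +
              (if ∃ i, ε < |(expval (ψ i o (o i)) (nPauli a)).re| then (1:ℝ) else 0)) := by
              rw [← Finset.mul_sum]
          _ ≤ (∏ i, w i o (o i)) * (K * (N * ε) + N * (K * ε)) := by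
              refine mul_le_mul_of_nonneg_left ?_ hPpos
              rw [Finset.sum_add_distrib, Finset.sum_const, nsmul_eq_mul, hAcard]
              have := hcount
              linarith
      calc K⁻¹ * ∑ a ∈ A, ((∏ i, w i o (o i)) *
            max (1 - ∏ i, (1 + (expval (ψ i o (o i)) (nPauli a)).re)) 0)
          ≤ K⁻¹ * ((∏ i, w i o (o i)) * (K * (N * ε) + N * (K * ε))) :=
            mul_le_mul_of_nonneg_left e3 (inv_nonneg.mpr hK0.le)
        _ = 2 * N * ε * ∏ i, w i o (o i) := by
            field_simp
            ring
    calc ∑ o : Fin N → O, max ((∏ i, w i o (o i)) -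
          K⁻¹ * ∑ a ∈ A, ∏ i, w i o (o i) * (1 + (expval (ψ i o (o i)) (nPauli a)).re)) 0
        ≤ ∑ o : Fin N → O, 2 * N * ε * ∏ i, w i o (o i) :=
          Finset.sum_le_sum fun o _ => hpt o
      _ = 2 * N * ε * ∑ o : Fin N → O, ∏ i, w i o (o i) := by rw [← Finset.mul_sum]
      _ = 2 * N * ε := by rw [hP1, mul_one]
end
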